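/- Let T > 0, let a > 0 and 0 < η < 1, let ω : [0,T] → [0,∞) be continuous, and let v : [0,T] → [0,∞) be a bounded measurable function satisfying v(t) ≤ ω(t) + a ∫₀ᵗ (t−s)^{η−1} v(s) ds for all t ∈ [0,T]. Then for all t ∈ [0,T], v(t) ≤ 2ω(t) + (8 a t^{η/2} / η) · exp(4^{2/η} a^{2/η} t² / η^{2/η}) · (∫₀ᵗ ω(s)^{2/η} ds)^{η/2}. -/

import Mathlib

open MeasureTheory intervalIntegral

lemma sg_int_pow (t c : ℝ) (k : ℕ) : ∫ s in (0:ℝ)..t, c * s ^ k = c * (t ^ (k+1) / (k+1)) := by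
  rw [intervalIntegral.integral_const_mul, integral_pow]
  norm_num

lemma sg_gronwall_integral {t₀ A B C : ℝ} {V : ℝ → ℝ} (ht₀ : 0 ≤ t₀) (hA : 0 ≤ A) (hB : 0 ≤ B)
    (hVc : ContinuousOn V (Set.Icc 0 t₀))
    (hVC : ∀ t ∈ Set.Icc (0:ℝ) t₀, V t ≤ C)
    (h : ∀ t ∈ Set.Icc (0:ℝ) t₀, V t ≤ A + B * ∫ s in (0:ℝ)..t, V s) :
    V t₀ ≤ A * Real.exp (B * t₀) := by
  have key : ∀ n : ℕ, ∀ t ∈ Set.Icc (0:ℝ) t₀,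
      V t ≤ A * (∑ k ∈ Finset.range n, (B*t)^k / (Nat.factorial k)) + C * (B*t)^n / (Nat.factorial n) := by
    intro n
    induction n with
    | zero =>
      intro t ht
      simpa using hVC t ht
    | succ n ih =>
      intro t ht
      have ht0 : (0:ℝ) ≤ t := ht.1
      have hVint : IntervalIntegrable V volume 0 t := by
        apply ContinuousOn.intervalIntegrable
        apply hVc.mono
        rw [Set.uIcc_of_le ht0]
        exact Set.Icc_subset_Icc le_rfl ht.2
      have hc1 : Continuous (fun s : ℝ => ∑ k ∈ Finset.range n, (A * B^k / (Nat.factorial k : ℝ)) * s^k) :=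
        continuous_finset_sum _ (fun k _ => continuous_const.mul (continuous_pow k))
      have hc2 : Continuous (fun s : ℝ => (C * B^n / (Nat.factorial n : ℝ)) * s^n) :=
        continuous_const.mul (continuous_pow n)
      have hPbound : ∀ s ∈ Set.Icc (0:ℝ) t, V s ≤
          (∑ k ∈ Finset.range n, (A * B^k / (Nat.factorial k : ℝ)) * s^k)
            + (C * B^n / (Nat.factorial n : ℝ)) * s^n := by
        intro s hs
        have hs' : s ∈ Set.Icc (0:ℝ) t₀ := ⟨hs.1, hs.2.trans ht.2⟩
        refine (ih s hs').trans_eq ?_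
        rw [Finset.mul_sum]
        congr 1
        · exact Finset.sum_congr rfl (fun k _ => by rw [mul_pow]; ring)
        · rw [mul_pow]; ring
      have hintP : (∫ s in (0:ℝ)..t, ((∑ k ∈ Finset.range n, (A * B^k / (Nat.factorial k : ℝ)) * s^k)
            + (C * B^n / (Nat.factorial n : ℝ)) * s^n))
          = (∑ k ∈ Finset.range n, (A * B^k / (Nat.factorial k : ℝ)) * (t^(k+1)/(k+1)))
            + (C * B^n / (Nat.factorial n : ℝ)) * (t^(n+1)/(n+1)) := by
        rw [intervalIntegral.integral_add (hc1.intervalIntegrable _ _) (hc2.intervalIntegrable _ _)]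
        rw [intervalIntegral.integral_finset_sum (f := fun k s => A * B^k / (Nat.factorial k : ℝ) * s^k)
          (fun k _ => (continuous_const.mul (continuous_pow k)).intervalIntegrable (μ := volume) 0 t)]
        rw [sg_int_pow]
        congr 1
        exact Finset.sum_congr rfl (fun k _ => sg_int_pow t _ k)
      have step1 : V t ≤ A + B * ((∑ k ∈ Finset.range n, (A * B^k / (Nat.factorial k : ℝ)) * (t^(k+1)/(k+1)))
            + (C * B^n / (Nat.factorial n : ℝ)) * (t^(n+1)/(n+1))) := by
        refine (h t ht).trans ?_
        rw [← hintP]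
        gcongr
        exact intervalIntegral.integral_mono_on ht0 hVint
          ((hc1.add hc2).intervalIntegrable _ _) hPbound
      refine step1.trans_eq ?_
      have hsum : B * (∑ k ∈ Finset.range n, (A * B^k / (Nat.factorial k : ℝ)) * (t^(k+1)/(k+1)))
          = A * (∑ k ∈ Finset.range n, (B*t)^(k+1) / (Nat.factorial (k+1))) := by
        rw [Finset.mul_sum, Finset.mul_sum]
        refine Finset.sum_congr rfl (fun k _ => ?_)
        have hfac : ((Nat.factorial (k+1) : ℝ)) = ((k:ℝ)+1) * (Nat.factorial k : ℝ) := by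
          rw [Nat.factorial_succ]; push_cast; ring
        have h1 : (Nat.factorial k : ℝ) ≠ 0 := Nat.cast_ne_zero.2 (Nat.factorial_ne_zero k)
        have h2 : ((k:ℝ)+1) ≠ 0 := by positivity
        rw [hfac, mul_pow]
        field_simp
        ring
      have hterm : B * ((C * B^n / (Nat.factorial n : ℝ)) * (t^(n+1)/(n+1)))
          = C * (B*t)^(n+1) / (Nat.factorial (n+1)) := by
        have hfac : ((Nat.factorial (n+1) : ℝ)) = ((n:ℝ)+1) * (Nat.factorial n : ℝ) := by
          rw [Nat.factorial_succ]; push_cast; ring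
        have h1 : (Nat.factorial n : ℝ) ≠ 0 := Nat.cast_ne_zero.2 (Nat.factorial_ne_zero n)
        have h2 : ((n:ℝ)+1) ≠ 0 := by positivity
        rw [hfac, mul_pow]
        field_simp
        ring
      rw [mul_add, hsum, hterm, Finset.sum_range_succ']
      simp [Nat.factorial_zero]
      ring
  -- pass to the limit
  have hlim : Filter.Tendsto (fun n : ℕ => A * Real.exp (B*t₀) + (max C 0) * ((B*t₀)^n / (Nat.factorial n)))
      Filter.atTop (nhds (A * Real.exp (B*t₀))) := by
    have := (FloorSemiring.tendsto_pow_div_factorial_atTop (K := ℝ) (B*t₀)).const_mul (max C 0)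
    simpa using this.const_add (A * Real.exp (B*t₀))
  refine ge_of_tendsto hlim (Filter.Eventually.of_forall (fun n => ?_))
  have hb : (0:ℝ) ≤ B * t₀ := mul_nonneg hB ht₀
  have h1 := key n t₀ ⟨ht₀, le_rfl⟩
  have h2 : A * (∑ k ∈ Finset.range n, (B*t₀)^k / (Nat.factorial k)) ≤ A * Real.exp (B*t₀) :=
    mul_le_mul_of_nonneg_left (Real.sum_le_exp_of_nonneg hb n) hA
  have h3 : C * (B*t₀)^n / (Nat.factorial n) ≤ (max C 0) * ((B*t₀)^n / (Nat.factorial n)) := by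
    rw [mul_div_assoc]
    apply mul_le_mul_of_nonneg_right (le_max_left _ _)
    positivity
  linarith

lemma sg_holder {η p q t : ℝ} (hη₁ : 0 < η) (hη₂ : η < 1)
    (hp : p = 2/(2-η)) (hq : q = 2/η) (ht0 : 0 ≤ t)
    {v : ℝ → ℝ} (hv_meas : Measurable v) {M : ℝ}
    (hv_nonneg : ∀ s ∈ Set.Icc (0:ℝ) t, 0 ≤ v s) (hv_le : ∀ s ∈ Set.Icc (0:ℝ) t, v s ≤ M) :
    (∫ s in (0:ℝ)..t, (t - s) ^ (η - 1) * v s)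
      ≤ 2/η * t ^ (η/2) * (∫ s in (0:ℝ)..t, v s ^ q) ^ (η/2) := by
  have hη2 : (0:ℝ) < 2 - η := by linarith
  have hp1 : 1 < p := by rw [hp, lt_div_iff₀ hη2]; linarith
  have hq1 : 1 < q := by rw [hq, lt_div_iff₀ hη₁]; linarith
  have hp0 : 0 < p := by linarith
  have hq0 : 0 < q := by linarith
  have hpq : Real.HolderConjugate p q := by
    rw [Real.holderConjugate_iff]; constructor
    · exact hp1
    · rw [hp, hq]
      field_simp
      ring
  have hr : (η - 1) * p + 1 = η / (2 - η) := by rw [hp]; field_simp; ring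
  have hrpos : 0 < η / (2 - η) := by positivity
  have hrneg : -1 < (η - 1) * p := by linarith
  have h1q : 1/q = η/2 := by rw [hq, one_div_div]
  have h1p : 1/p = (2-η)/2 := by rw [hp, one_div_div]
  set μ := volume.restrict (Set.Ioc (0:ℝ) t) with hμ
  haveI hfin : IsFiniteMeasure μ := by
    constructor
    rw [hμ, Measure.restrict_apply_univ]
    exact measure_Ioc_lt_top
  have hker_ae : ∀ᵐ s ∂μ, s ∈ Set.Ioc (0:ℝ) t := ae_restrict_mem measurableSet_Ioc
  have hkmeas : Measurable (fun s : ℝ => (t - s) ^ (η - 1)) := by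
    have hg : Measurable (fun x : ℝ => x ^ (η - 1)) :=
      measurable_of_continuousOn_compl_singleton (0:ℝ)
        (continuousOn_of_forall_continuousAt fun x hx =>
          Real.continuousAt_rpow_const x (η-1) (Or.inl hx))
    exact hg.comp (measurable_const.sub measurable_id)
  -- integrability of the powered kernel
  have hint_rp : IntegrableOn (fun s => (t - s) ^ ((η-1)*p)) (Set.Ioc (0:ℝ) t) := by
    have h1 : IntervalIntegrable (fun x : ℝ => x ^ ((η-1)*p)) volume 0 t :=
      intervalIntegral.intervalIntegrable_rpow' hrneg
    have h2 := (h1.comp_sub_left t).symm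
    simp only [sub_zero, sub_self] at h2
    exact h2.1
  have hfLp : MemLp (fun s : ℝ => (t - s) ^ (η - 1)) (ENNReal.ofReal p) μ := by
    have hp0' : ENNReal.ofReal p ≠ 0 := by
      simp only [ne_eq, ENNReal.ofReal_eq_zero, not_le]; linarith
    have hptop : ENNReal.ofReal p ≠ ⊤ := ENNReal.ofReal_ne_top
    rw [← memLp_norm_rpow_iff (hkmeas.aestronglyMeasurable) hp0' hptop,
      ENNReal.div_self hp0' hptop, ENNReal.toReal_ofReal hp0.le,
      memLp_one_iff_integrable]
    refine hint_rp.congr ?_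
    filter_upwards [hker_ae] with s hs
    have hts : (0:ℝ) ≤ t - s := sub_nonneg.2 hs.2
    rw [Real.norm_eq_abs, abs_of_nonneg (Real.rpow_nonneg hts _), Real.rpow_mul hts]
  have hvLq : MemLp v (ENNReal.ofReal q) μ := by
    refine MemLp.of_bound hv_meas.aestronglyMeasurable M ?_
    filter_upwards [hker_ae] with s hs
    have hs' : s ∈ Set.Icc (0:ℝ) t := ⟨hs.1.le, hs.2⟩
    rw [Real.norm_eq_abs, abs_of_nonneg (hv_nonneg s hs')]
    exact hv_le s hs'
  have hf_nonneg : 0 ≤ᵐ[μ] (fun s : ℝ => (t - s) ^ (η - 1)) := by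
    filter_upwards [hker_ae] with s hs
    exact Real.rpow_nonneg (sub_nonneg.2 hs.2) _
  have hg_nonneg : 0 ≤ᵐ[μ] v := by
    filter_upwards [hker_ae] with s hs
    exact hv_nonneg s ⟨hs.1.le, hs.2⟩
  have hHold := MeasureTheory.integral_mul_le_Lp_mul_Lq_of_nonneg hpq hf_nonneg hg_nonneg hfLp hvLq
  -- rewrite both sides
  have e1 : (∫ s in (0:ℝ)..t, (t - s) ^ (η - 1) * v s) = ∫ s, (t - s) ^ (η - 1) * v s ∂μ :=
    intervalIntegral.integral_of_le ht0
  have e2 : (∫ s, v s ^ q ∂μ) = ∫ s in (0:ℝ)..t, v s ^ q :=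
    (intervalIntegral.integral_of_le ht0).symm
  have e3 : (∫ s, ((t - s) ^ (η - 1)) ^ p ∂μ) = t ^ (η/(2-η)) * ((2-η)/η) := by
    have e3a : (∫ s, ((t - s) ^ (η - 1)) ^ p ∂μ) = ∫ s in (0:ℝ)..t, (t - s) ^ ((η-1)*p) := by
      rw [intervalIntegral.integral_of_le ht0]
      refine setIntegral_congr_fun measurableSet_Ioc (fun s hs => ?_)
      rw [Real.rpow_mul (sub_nonneg.2 hs.2)]
    rw [e3a, intervalIntegral.integral_comp_sub_left (fun u => u ^ ((η-1)*p)) t]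
    rw [sub_self, sub_zero, integral_rpow (Or.inl hrneg)]
    rw [Real.zero_rpow (by linarith), hr]
    rw [div_eq_mul_inv, inv_div]
    ring_nf
  rw [← e1, e2, e3] at hHold
  refine hHold.trans ?_
  have hVnn : (0:ℝ) ≤ ∫ s in (0:ℝ)..t, v s ^ q :=
    intervalIntegral.integral_nonneg ht0 (fun s hs => Real.rpow_nonneg (hv_nonneg s hs) q)
  rw [h1q]
  refine mul_le_mul_of_nonneg_right ?_ (Real.rpow_nonneg hVnn _)
  -- (t ^ (η/(2-η)) * ((2-η)/η)) ^ (1/p) ≤ 2/η * t ^ (η/2)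
  rw [Real.mul_rpow (Real.rpow_nonneg ht0 _) (by positivity), h1p]
  have ht1 : (t ^ (η/(2-η))) ^ ((2-η)/2) = t ^ (η/2) := by
    rw [← Real.rpow_mul ht0]
    congr 1
    field_simp
  rw [ht1, mul_comm (2/η) (t ^ (η/2))]
  refine mul_le_mul_of_nonneg_left ?_ (Real.rpow_nonneg ht0 _)
  calc ((2-η)/η) ^ ((2-η)/2) ≤ ((2-η)/η) ^ (1:ℝ) := by
        apply Real.rpow_le_rpow_of_exponent_le
        · rw [le_div_iff₀ hη₁]; linarith
        · linarith
    _ = (2-η)/η := Real.rpow_one _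
    _ ≤ 2/η := by gcongr <;> linarith

lemma sg_add_rpow_le {x y q : ℝ} (hx : 0 ≤ x) (hy : 0 ≤ y) (hq : 0 ≤ q) :
    (x + y) ^ q ≤ 2 ^ q * (x ^ q + y ^ q) := by
  have h1 : x + y ≤ 2 * max x y := by
    have := le_max_left x y
    have := le_max_right x y
    linarith
  calc (x + y) ^ q ≤ (2 * max x y) ^ q := Real.rpow_le_rpow (by linarith) h1 hq
    _ = 2 ^ q * (max x y) ^ q := Real.mul_rpow (by norm_num) (le_trans hx (le_max_left x y))
    _ ≤ 2 ^ q * (x ^ q + y ^ q) := by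
        refine mul_le_mul_of_nonneg_left ?_ (Real.rpow_nonneg (by norm_num) q)
        rcases max_choice x y with h | h <;> rw [h]
        · nlinarith [Real.rpow_nonneg hy q]
        · nlinarith [Real.rpow_nonneg hx q]

/-- Gronwall-type lemma for the singular kernel `(t−s)^(η−1)`: if
`v(t) ≤ ω(t) + a ∫₀ᵗ (t−s)^(η−1) v(s) ds` on `[0,T]`, then
`v(t) ≤ 2ω(t) + (8 a t^(η/2)/η) exp(4^(2/η) a^(2/η) t²/η^(2/η)) (∫₀ᵗ ω(s)^(2/η) ds)^(η/2)`. -/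
theorem singular_gronwall (T a η : ℝ) (hT : 0 < T) (ha : 0 < a) (hη₁ : 0 < η) (hη₂ : η < 1)
    (ω v : ℝ → ℝ)
    (hω_cont : ContinuousOn ω (Set.Icc 0 T))
    (hω_nonneg : ∀ t ∈ Set.Icc (0 : ℝ) T, 0 ≤ ω t)
    (hv_meas : Measurable v)
    (hv_bdd : ∃ M : ℝ, ∀ t ∈ Set.Icc (0 : ℝ) T, v t ≤ M)
    (hv_nonneg : ∀ t ∈ Set.Icc (0 : ℝ) T, 0 ≤ v t)
    (hineq : ∀ t ∈ Set.Icc (0 : ℝ) T,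
      v t ≤ ω t + a * ∫ s in (0 : ℝ)..t, (t - s) ^ (η - 1) * v s) :
    ∀ t ∈ Set.Icc (0 : ℝ) T,
      v t ≤ 2 * ω t
        + (8 * a * t ^ (η / 2) / η)
          * Real.exp ((4 : ℝ) ^ (2 / η) * a ^ (2 / η) * t ^ 2 / η ^ (2 / η))
          * (∫ s in (0 : ℝ)..t, ω s ^ (2 / η)) ^ (η / 2) := by
  obtain ⟨M, hM⟩ := hv_bdd
  have h0T : (0:ℝ) ∈ Set.Icc (0:ℝ) T := ⟨le_rfl, hT.le⟩
  have hM0 : 0 ≤ M := (hv_nonneg 0 h0T).trans (hM 0 h0T)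
  have hη2 : (0:ℝ) < 2 - η := by linarith
  set q : ℝ := 2 / η with hq
  have hq0 : 0 < q := by positivity
  have hηq : (η/2) * q = 1 := by rw [hq]; field_simp
  have hqη : q * (η/2) = 1 := by rw [hq]; field_simp
  have h2q : (0:ℝ) ≤ 2 ^ q := Real.rpow_nonneg (by norm_num) q
  have hmeas_vq : Measurable (fun s => v s ^ q) :=
    (Real.continuous_rpow_const hq0.le).measurable.comp hv_meas
  have hvq_int : IntegrableOn (fun s => v s ^ q) (Set.Icc (0:ℝ) T) := by
    refine Integrable.mono' (g := fun _ => M ^ q)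
      (integrableOn_const (measure_Icc_lt_top).ne)
      hmeas_vq.aestronglyMeasurable ?_
    filter_upwards [ae_restrict_mem measurableSet_Icc] with x hx
    rw [Real.norm_eq_abs, abs_of_nonneg (Real.rpow_nonneg (hv_nonneg x hx) q)]
    exact Real.rpow_le_rpow (hv_nonneg x hx) (hM x hx) hq0.le
  have hvq_ii : ∀ t ∈ Set.Icc (0:ℝ) T, IntervalIntegrable (fun s => v s ^ q) volume 0 t := by
    intro t ht
    rw [intervalIntegrable_iff_integrableOn_Ioc_of_le ht.1]
    exact hvq_int.mono_set (Set.Ioc_subset_Icc_self.trans (Set.Icc_subset_Icc le_rfl ht.2))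
  set V : ℝ → ℝ := fun t => ∫ s in (0:ℝ)..t, v s ^ q with hV
  have hV_nonneg : ∀ t ∈ Set.Icc (0:ℝ) T, 0 ≤ V t := fun t ht =>
    intervalIntegral.integral_nonneg ht.1
      (fun s hs => Real.rpow_nonneg (hv_nonneg s ⟨hs.1, hs.2.trans ht.2⟩) q)
  have hωq_cont : ContinuousOn (fun s => ω s ^ q) (Set.Icc (0:ℝ) T) :=
    hω_cont.rpow_const (fun x _ => Or.inr hq0.le)
  have hHolder : ∀ t ∈ Set.Icc (0:ℝ) T,
      (∫ s in (0:ℝ)..t, (t - s) ^ (η - 1) * v s) ≤ 2/η * t ^ (η/2) * V t ^ (η/2) := by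
    intro t ht
    simp only [hV]
    exact sg_holder hη₁ hη₂ rfl hq ht.1 hv_meas
      (fun s hs => hv_nonneg s ⟨hs.1, hs.2.trans ht.2⟩)
      (fun s hs => hM s ⟨hs.1, hs.2.trans ht.2⟩)
  intro t₀ ht₀
  have ht₀0 : 0 ≤ t₀ := ht₀.1
  have ht₀T : t₀ ≤ T := ht₀.2
  set D : ℝ := 2 * a / η * t₀ ^ (η/2) with hD
  have hD0 : 0 ≤ D := by positivity
  set B : ℝ := 2 ^ q * D ^ q with hB
  have hB0 : 0 ≤ B := mul_nonneg h2q (Real.rpow_nonneg hD0 q)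
  set W : ℝ := ∫ s in (0:ℝ)..t₀, ω s ^ q with hW
  have hW0 : 0 ≤ W := by
    rw [hW]
    exact intervalIntegral.integral_nonneg ht₀0
      (fun s hs => Real.rpow_nonneg (hω_nonneg s ⟨hs.1, hs.2.trans ht₀T⟩) q)
  have hptv : ∀ t ∈ Set.Icc (0:ℝ) t₀, v t ≤ ω t + D * V t ^ (η/2) := by
    intro t ht
    have htT : t ∈ Set.Icc (0:ℝ) T := ⟨ht.1, ht.2.trans ht₀T⟩
    refine (hineq t htT).trans ?_
    have h2 : a * (∫ s in (0:ℝ)..t, (t - s) ^ (η - 1) * v s)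
        ≤ a * (2/η * t ^ (η/2) * V t ^ (η/2)) :=
      mul_le_mul_of_nonneg_left (hHolder t htT) ha.le
    have hVn : 0 ≤ V t ^ (η/2) := Real.rpow_nonneg (hV_nonneg t htT) _
    have h4 : t ^ (η/2) ≤ t₀ ^ (η/2) := Real.rpow_le_rpow ht.1 ht.2 (by positivity)
    have h5 : a * (2/η * t ^ (η/2)) ≤ D := by
      rw [hD, show a * (2/η * t ^ (η/2)) = 2 * a / η * t ^ (η/2) by ring]
      exact mul_le_mul_of_nonneg_left h4 (by positivity)
    have h3 : a * (2/η * t ^ (η/2) * V t ^ (η/2)) ≤ D * V t ^ (η/2) := by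
      calc a * (2/η * t ^ (η/2) * V t ^ (η/2))
          = a * (2/η * t ^ (η/2)) * V t ^ (η/2) := by ring
        _ ≤ D * V t ^ (η/2) := mul_le_mul_of_nonneg_right h5 hVn
    linarith
  have hpt : ∀ t ∈ Set.Icc (0:ℝ) t₀, v t ^ q ≤ 2 ^ q * ω t ^ q + B * V t := by
    intro t ht
    have htT : t ∈ Set.Icc (0:ℝ) T := ⟨ht.1, ht.2.trans ht₀T⟩
    have hVn0 : 0 ≤ V t := hV_nonneg t htT
    have hVn : 0 ≤ V t ^ (η/2) := Real.rpow_nonneg hVn0 _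
    have h3 : v t ^ q ≤ (ω t + D * V t ^ (η/2)) ^ q :=
      Real.rpow_le_rpow (hv_nonneg t htT) (hptv t ht) hq0.le
    have h4 := sg_add_rpow_le (hω_nonneg t htT) (mul_nonneg hD0 hVn) hq0.le
    have h6 : (V t ^ (η/2)) ^ q = V t := by
      rw [← Real.rpow_mul hVn0, hηq, Real.rpow_one]
    have h5 : (D * V t ^ (η/2)) ^ q = D ^ q * V t := by
      rw [Real.mul_rpow hD0 hVn, h6]
    calc v t ^ q ≤ (ω t + D * V t ^ (η/2)) ^ q := h3
      _ ≤ 2 ^ q * (ω t ^ q + (D * V t ^ (η/2)) ^ q) := h4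
      _ = 2 ^ q * ω t ^ q + B * V t := by rw [h5, hB]; ring
  have hV_contOn : ContinuousOn V (Set.Icc (0:ℝ) t₀) := by
    have hint : IntegrableOn (fun s => v s ^ q) (Set.uIcc (0:ℝ) t₀) := by
      rw [Set.uIcc_of_le ht₀0]
      exact hvq_int.mono_set (Set.Icc_subset_Icc le_rfl ht₀T)
    have h := intervalIntegral.continuousOn_primitive_interval hint
    rw [Set.uIcc_of_le ht₀0] at h
    simp only [hV]
    exact h
  have hV_le : ∀ t ∈ Set.Icc (0:ℝ) t₀, V t ≤ T * M ^ q := by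
    intro t ht
    have htT : t ∈ Set.Icc (0:ℝ) T := ⟨ht.1, ht.2.trans ht₀T⟩
    have h1 : V t ≤ ∫ _ in (0:ℝ)..t, M ^ q := by
      refine intervalIntegral.integral_mono_on ht.1 (hvq_ii t htT) intervalIntegrable_const ?_
      intro s hs
      exact Real.rpow_le_rpow (hv_nonneg s ⟨hs.1, hs.2.trans htT.2⟩)
        (hM s ⟨hs.1, hs.2.trans htT.2⟩) hq0.le
    rw [intervalIntegral.integral_const, smul_eq_mul, sub_zero] at h1
    have h2 : t * M ^ q ≤ T * M ^ q :=
      mul_le_mul_of_nonneg_right htT.2 (Real.rpow_nonneg hM0 q)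
    linarith
  have hA0 : 0 ≤ 2 ^ q * W := mul_nonneg h2q hW0
  have hVineq : ∀ t ∈ Set.Icc (0:ℝ) t₀, V t ≤ 2 ^ q * W + B * ∫ s in (0:ℝ)..t, V s := by
    intro t ht
    have htT : t ∈ Set.Icc (0:ℝ) T := ⟨ht.1, ht.2.trans ht₀T⟩
    have hii1 : IntervalIntegrable (fun s => 2 ^ q * ω s ^ q) volume 0 t := by
      refine ContinuousOn.intervalIntegrable (continuousOn_const.mul (hωq_cont.mono ?_))
      rw [Set.uIcc_of_le ht.1]
      exact Set.Icc_subset_Icc le_rfl htT.2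
    have hii2 : IntervalIntegrable (fun s => B * V s) volume 0 t := by
      refine ContinuousOn.intervalIntegrable (continuousOn_const.mul (hV_contOn.mono ?_))
      rw [Set.uIcc_of_le ht.1]
      exact Set.Icc_subset_Icc le_rfl ht.2
    have step : V t ≤ ∫ s in (0:ℝ)..t, (2 ^ q * ω s ^ q + B * V s) :=
      intervalIntegral.integral_mono_on ht.1 (hvq_ii t htT) (hii1.add hii2)
        (fun s hs => hpt s ⟨hs.1, hs.2.trans ht.2⟩)
    rw [intervalIntegral.integral_add hii1 hii2, intervalIntegral.integral_const_mul,
      intervalIntegral.integral_const_mul] at step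
    have hiiω1 : IntervalIntegrable (fun s => ω s ^ q) volume 0 t := by
      refine ContinuousOn.intervalIntegrable (hωq_cont.mono ?_)
      rw [Set.uIcc_of_le ht.1]
      exact Set.Icc_subset_Icc le_rfl htT.2
    have hiiω2 : IntervalIntegrable (fun s => ω s ^ q) volume t t₀ := by
      refine ContinuousOn.intervalIntegrable (hωq_cont.mono ?_)
      rw [Set.uIcc_of_le ht.2]
      exact Set.Icc_subset_Icc ht.1 ht₀T
    have hadj := intervalIntegral.integral_add_adjacent_intervals hiiω1 hiiω2
    have hpos : 0 ≤ ∫ s in t..t₀, ω s ^ q :=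
      intervalIntegral.integral_nonneg ht.2
        (fun s hs => Real.rpow_nonneg (hω_nonneg s ⟨ht.1.trans hs.1, hs.2.trans ht₀T⟩) q)
    have hWle : (∫ s in (0:ℝ)..t, ω s ^ q) ≤ W := by
      rw [hW]; linarith [hadj]
    have h7 : 2 ^ q * (∫ s in (0:ℝ)..t, ω s ^ q) ≤ 2 ^ q * W :=
      mul_le_mul_of_nonneg_left hWle h2q
    linarith
  have hVt₀ := sg_gronwall_integral ht₀0 hA0 hB0 hV_contOn hV_le hVineq
  -- final assembly
  have hexp0 : (0:ℝ) ≤ Real.exp (B * t₀) := (Real.exp_pos _).le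
  have hVt0q : V t₀ ^ (η/2) ≤ 2 * W ^ (η/2) * Real.exp (B * t₀) := by
    have h1 : V t₀ ^ (η/2) ≤ (2 ^ q * W * Real.exp (B * t₀)) ^ (η/2) :=
      Real.rpow_le_rpow (hV_nonneg t₀ ht₀) hVt₀ (by positivity)
    have h2 : (2 ^ q * W * Real.exp (B * t₀)) ^ (η/2)
        = (2:ℝ) ^ (q * (η/2)) * W ^ (η/2) * Real.exp (B*t₀) ^ (η/2) := by
      rw [Real.mul_rpow (mul_nonneg h2q hW0) hexp0, Real.mul_rpow h2q hW0,
        ← Real.rpow_mul (by norm_num : (0:ℝ) ≤ 2)]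
    rw [h2, hqη, Real.rpow_one] at h1
    have hBt0 : 0 ≤ B * t₀ := mul_nonneg hB0 ht₀0
    have h3 : Real.exp (B*t₀) ^ (η/2) ≤ Real.exp (B*t₀) := by
      rw [← Real.exp_mul]
      apply Real.exp_le_exp.2
      nlinarith
    calc V t₀ ^ (η/2) ≤ 2 * W ^ (η/2) * Real.exp (B*t₀) ^ (η/2) := h1
      _ ≤ 2 * W ^ (η/2) * Real.exp (B*t₀) := by
          refine mul_le_mul_of_nonneg_left h3 ?_
          have := Real.rpow_nonneg hW0 (η/2)
          linarith
  have hBt : B * t₀ = 4 ^ q * a ^ q * t₀ ^ 2 / η ^ q := by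
    have hDq : D ^ q = (2 * a / η) ^ q * t₀ := by
      rw [hD, Real.mul_rpow (by positivity) (Real.rpow_nonneg ht₀0 _),
        ← Real.rpow_mul ht₀0, hηq, Real.rpow_one]
    have h24 : (2:ℝ) ^ q * (2 * a / η) ^ q = 4 ^ q * a ^ q / η ^ q := by
      rw [← Real.mul_rpow (by norm_num) (by positivity),
        show (2:ℝ) * (2 * a / η) = 4 * a / η by ring,
        Real.div_rpow (by positivity) hη₁.le, Real.mul_rpow (by norm_num) ha.le]
    rw [hB, hDq, show (2:ℝ)^q * ((2*a/η)^q * t₀) * t₀ = ((2:ℝ)^q * (2*a/η)^q) * t₀^2 by ring,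
      h24]
    ring
  have hfin : v t₀ ≤ ω t₀ + D * (2 * W ^ (η/2) * Real.exp (B * t₀)) := by
    refine (hptv t₀ ⟨ht₀0, le_rfl⟩).trans ?_
    have := mul_le_mul_of_nonneg_left hVt0q hD0
    linarith
  have hgoal2 : D * (2 * W ^ (η/2) * Real.exp (B * t₀))
      = (4 * a * t₀ ^ (η/2) / η) * Real.exp (4 ^ q * a ^ q * t₀ ^ 2 / η ^ q) * W ^ (η/2) := by
    rw [← hBt, hD]; ring
  rw [hgoal2] at hfin
  have hW2 : 0 ≤ W ^ (η/2) := Real.rpow_nonneg hW0 _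
  have hEx : (0:ℝ) < Real.exp (4 ^ q * a ^ q * t₀ ^ 2 / η ^ q) := Real.exp_pos _
  have ht2 : 0 ≤ t₀ ^ (η/2) := Real.rpow_nonneg ht₀0 _
  have hg : (4 * a * t₀ ^ (η/2) / η) * Real.exp (4 ^ q * a ^ q * t₀ ^ 2 / η ^ q) * W ^ (η/2)
      ≤ (8 * a * t₀ ^ (η/2) / η) * Real.exp (4 ^ q * a ^ q * t₀ ^ 2 / η ^ q) * W ^ (η/2) := by
    have hc : 4 * a * t₀ ^ (η/2) / η ≤ 8 * a * t₀ ^ (η/2) / η := by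
      gcongr
      nlinarith
    exact mul_le_mul_of_nonneg_right (mul_le_mul_of_nonneg_right hc hEx.le) hW2
  have hterm : 0 ≤ (4 * a * t₀ ^ (η/2) / η) * Real.exp (4 ^ q * a ^ q * t₀ ^ 2 / η ^ q)
      * W ^ (η/2) := by positivity
  have hω0 := hω_nonneg t₀ ht₀
  linarith
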